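/- Let C ⊂ ℝ³ be the convex hull of the four curves γ₁(t) = (0, −sin t, cos t − 1), γ₂(t) = (0, cos t − 1, −sin t), γ₃(t) = (−sin t, 1 − cos t, 0), γ₄(t) = (cos t − 1, sin t, 0), each for t ∈ [0, π/4], and let F = conv{γ₃, γ₄} (a face of C containing x = (0,0,0)). Then C fails tangential exposure at x for F: the vector g = (0, −1, 0) belongs to T(x;C) ∩ span(F) but g ∉ T(x;F); in particular, ⟨g, γ₃(t)⟩ ≤ 0 and ⟨g, γ₄(t)⟩ ≤ 0 for all t ∈ [0, π/4], while g = lim_{s↓0} (0, −sin s, cos s − 1)/s. -/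

import Mathlib

/- Common definitions following "Facially Dual Complete (Nice) cones and
lexicographic tangents" by V. Roshchina and L. Tunçel. -/

open Set Filter
open scoped Pointwise

local notation "⟪" x ", " y "⟫" => @inner ℝ _ _ x y

variable {E : Type*} [NormedAddCommGroup E] [InnerProductSpace ℝ E]

/-- The tangent cone to a set `C` at `x`: the closure of the cone of feasible
directions `{d : x + ε • d ∈ C for some ε > 0}`. -/
def TangCone (x : E) (C : Set E) : Set E :=
  closure {d : E | ∃ ε : ℝ, 0 < ε ∧ x + ε • d ∈ C}

/-- `F` is a face of the convex set `C`: a closed convex subset such that any open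
segment of `C` whose interior meets `F` has both endpoints in `F`. -/
def IsFaceOf (F C : Set E) : Prop :=
  F ⊆ C ∧ Convex ℝ F ∧ IsClosed F ∧
    ∀ x ∈ F, ∀ y ∈ C, ∀ z ∈ C, x ∈ openSegment ℝ y z → y ∈ F ∧ z ∈ F

/-- A proper face: a nonempty face different from the whole set. -/
def IsProperFaceOf (F C : Set E) : Prop := IsFaceOf F C ∧ F.Nonempty ∧ F ≠ C

/-- The dual cone `K* = {s : ⟨s,x⟩ ≥ 0 for all x ∈ K}`. -/
def DualCone' (K : Set E) : Set E := {s : E | ∀ x ∈ K, 0 ≤ ⟪s, x⟫}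

/-- `F^⊥ = {s : ⟨s,x⟩ = 0 for all x ∈ F}`. -/
def PerpOf (F : Set E) : Set E := {s : E | ∀ x ∈ F, ⟪s, x⟫ = 0}

/-- Facial dual completeness: `K* + F^⊥` is closed for every proper face `F` of `K`. -/
def IsFDC (K : Set E) : Prop :=
  ∀ F : Set E, IsProperFaceOf F K → IsClosed (DualCone' K + PerpOf F)

/-- Tangential exposure: `T(x;C) ∩ span F = T(x;F)` for every proper face `F` and `x ∈ F`. -/
def TangentiallyExposed (C : Set E) : Prop :=
  ∀ F : Set E, IsProperFaceOf F C → ∀ x ∈ F,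
    TangCone x C ∩ (Submodule.span ℝ F : Set E) = TangCone x F

/-- The family of all tangent cones of members of a family of sets. -/
def TangFamily (𝒦 : Set (Set E)) : Set (Set E) :=
  {T | ∃ C ∈ 𝒦, ∃ x ∈ C, T = TangCone x C}

/-- `𝒯^k(C)`: the `k`-fold iterated tangent-cone families of `C`;
its members are the lexicographic tangent cones (of order `k`) of `C`. -/
def TangIter (C : Set E) : ℕ → Set (Set E)
  | 0 => {C}
  | k + 1 => TangFamily (TangIter C k)

/-- Strong tangential exposure: `C` and all of its lexicographic tangent cones are
tangentially exposed. -/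
def StronglyTangentiallyExposed (C : Set E) : Prop :=
  ∀ k : ℕ, ∀ T ∈ TangIter C k, TangentiallyExposed T

/-- `F` is an exposed face of `C`: the set of maximizers over `C` of some linear functional. -/
def IsExposedFaceOf (F C : Set E) : Prop :=
  ∃ p : E, F = {x ∈ C | ∀ y ∈ C, ⟪p, y⟫ ≤ ⟪p, x⟫}

/-- `C` is facially exposed: every proper face of `C` is exposed. -/
def FaciallyExposed (C : Set E) : Prop :=
  ∀ F : Set E, IsProperFaceOf F C → IsExposedFaceOf F C

/-- The normal cone to `C` at `x`. -/
def NormalCone' (x : E) (C : Set E) : Set E := {s : E | ∀ y ∈ C, ⟪s, y - x⟫ ≤ 0}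

/-- The minimal face of `C` containing `S`. -/
def MinimalFace (S C : Set E) : Set E := ⋂₀ {F : Set E | IsFaceOf F C ∧ S ⊆ F}

/-- `K` is a cone: closed under positive scalar multiplication. -/
def IsConeSet (K : Set E) : Prop := ∀ c : ℝ, 0 < c → ∀ x ∈ K, c • x ∈ K


section Aux

variable {E : Type*} [NormedAddCommGroup E] [InnerProductSpace ℝ E]

/-- Points of a convex hull where a nonpositive linear functional vanishes
lie in the hull of the points of `s` where it vanishes. -/
lemma mem_convexHull_of_eq_zero {s : Set E} {ℓ : E →ₗ[ℝ] ℝ}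
    (hs : ∀ x ∈ s, ℓ x ≤ 0) {y : E}
    (hy : y ∈ convexHull ℝ s) (hy0 : ℓ y = 0) :
    y ∈ convexHull ℝ {x ∈ s | ℓ x = 0} := by
  rw [convexHull_eq] at hy
  obtain ⟨ι, t, w, z, hw0, hw1, hz, hyy⟩ := hy
  have hcm : y = ∑ i ∈ t, w i • z i := by
    rw [← hyy, Finset.centerMass_eq_of_sum_1 _ _ hw1]
  have hsum : ∑ i ∈ t, w i * ℓ (z i) = 0 := by
    have := congrArg ℓ hcm
    simpa [hy0, map_sum, map_smul, smul_eq_mul] using this.symm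
  have key : ∀ i ∈ t, w i ≠ 0 → ℓ (z i) = 0 := by
    have h0 : ∀ i ∈ t, w i * ℓ (z i) = 0 := by
      intro i hi
      have hterm : ∀ j ∈ t, 0 ≤ -(w j * ℓ (z j)) := fun j hj =>
        neg_nonneg.2 (mul_nonpos_of_nonneg_of_nonpos (hw0 j hj) (hs _ (hz j hj)))
      have := (Finset.sum_eq_zero_iff_of_nonneg hterm).1
        (by simp [Finset.sum_neg_distrib, hsum]) i hi
      linarith
    intro i hi hwi
    exact (mul_eq_zero.1 (h0 i hi)).resolve_left hwi
  have hfilter := Finset.centerMass_filter_ne_zero (t := t) (w := w) z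
  rw [← hfilter] at hyy
  refine hyy ▸ Finset.centerMass_mem_convexHull _ ?_ ?_ ?_
  · exact fun i hi => hw0 i (Finset.mem_filter.1 hi).1
  · rw [Finset.sum_filter_ne_zero]
    exact hw1 ▸ zero_lt_one
  · intro i hi
    obtain ⟨hit, hwi⟩ := Finset.mem_filter.1 hi
    exact ⟨hz i hit, key i hit hwi⟩

lemma isCompact_convexHull_fd {E : Type*} [NormedAddCommGroup E] [NormedSpace ℝ E]
    [FiniteDimensional ℝ E] {s : Set E} (hs : IsCompact s) :
    IsCompact (convexHull ℝ s) := by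
  classical
  rcases s.eq_empty_or_nonempty with rfl | ⟨x₀, hx₀⟩
  · simpa using isCompact_empty
  set N := Module.finrank ℝ E + 1 with hN
  set T : (Fin N → ℝ) × (Fin N → E) → E := fun p => ∑ i, p.1 i • p.2 i with hTdef
  have hT : Continuous T := by fun_prop
  have hK : IsCompact ((stdSimplex ℝ (Fin N)) ×ˢ (Set.univ.pi fun _ : Fin N => s)) :=
    (isCompact_stdSimplex _ _).prod (isCompact_univ_pi fun _ => hs)
  have himg : convexHull ℝ s =
      T '' ((stdSimplex ℝ (Fin N)) ×ˢ (Set.univ.pi fun _ : Fin N => s)) := by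
    apply Subset.antisymm
    · intro x hx
      rw [convexHull_eq_union] at hx
      simp only [mem_iUnion] at hx
      obtain ⟨t, hts, hai, hxt⟩ := hx
      have hcard : t.card ≤ N := by
        have h1 := hai.card_le_finrank_succ
        have h2 : Module.finrank ℝ (vectorSpan ℝ (Set.range ((↑) : t → E))) ≤
            Module.finrank ℝ E := Submodule.finrank_le _
        rw [Fintype.card_coe] at h1
        omega
      rw [Finset.convexHull_eq] at hxt
      obtain ⟨w, hw0, hw1, hwx⟩ := hxt
      have hxsum : x = ∑ y ∈ t, w y • y := by
        rw [← hwx, Finset.centerMass_eq_of_sum_1 _ _ hw1]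
        rfl
      set m := t.card with hm
      have hmN : N = m + (N - m) := by omega
      let e : Fin N ≃ (Fin m ⊕ Fin (N - m)) := (finCongr hmN).trans finSumFinEquiv.symm
      let c : Fin m → E := fun i => (t.equivFin.symm i : E)
      let g : Fin m ⊕ Fin (N - m) → ℝ := Sum.elim (fun i => w (c i)) 0
      let h : Fin m ⊕ Fin (N - m) → E := Sum.elim c (fun _ => x₀)
      refine ⟨(g ∘ e, h ∘ e), ⟨⟨fun i => ?_, ?_⟩, fun i _ => ?_⟩, ?_⟩
      · rcases he : (e i) with j | j
        · simp only [g, Function.comp_apply, he, Sum.elim_inl]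
          exact hw0 _ (t.equivFin.symm j).2
        · simp [g, Function.comp_apply, he]
      · -- sum of weights = 1
        have := Equiv.sum_comp e g
        rw [Function.comp_def]
        rw [this, Fintype.sum_sum_type]
        simp only [g, Sum.elim_inl, Sum.elim_inr, Pi.zero_apply]
        rw [Equiv.sum_comp t.equivFin.symm (fun y : ↑t => w y)]
        simp [Finset.sum_attach t w, hw1]
      · rcases he : (e i) with j | j
        · simp only [h, Function.comp_apply, he, Sum.elim_inl]
          exact hts (t.equivFin.symm j).2
        · simp [h, Function.comp_apply, he, hx₀]
      · -- T value = x
        show ∑ i, (g ∘ e) i • (h ∘ e) i = x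
        have := Equiv.sum_comp e (fun z => g z • h z)
        simp only [Function.comp_def]
        rw [this, Fintype.sum_sum_type]
        simp only [g, h, Sum.elim_inl, Sum.elim_inr, Pi.zero_apply, zero_smul,
          Finset.sum_const_zero, add_zero]
        rw [Equiv.sum_comp t.equivFin.symm (fun y : ↑t => w y • (y : E))]
        rw [hxsum]
        exact Finset.sum_attach t fun y => w y • y
    · rintro x ⟨⟨w, v⟩, ⟨hw, hv⟩, rfl⟩
      have := Finset.centerMass_mem_convexHull (Finset.univ : Finset (Fin N))
        (fun i _ => hw.1 i) (hw.2 ▸ zero_lt_one) (fun i _ => hv i (mem_univ i))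
      rwa [Finset.centerMass_eq_of_sum_1 _ _ hw.2] at this
  rw [himg]
  exact hK.image hT

lemma sin_lim' : Tendsto (fun s : ℝ => s⁻¹ * Real.sin s) (nhdsWithin 0 (Ioi 0)) (nhds 1) := by
  have h := (Real.hasDerivAt_sin 0)
  rw [hasDerivAt_iff_tendsto_slope] at h
  have h2 := h.mono_left (nhdsWithin_mono _ (fun x (hx : x ∈ Ioi 0) => ne_of_gt hx))
  rw [Real.cos_zero] at h2
  refine h2.congr (fun s => ?_)
  simp [slope_def_field, div_eq_inv_mul]

lemma cos_lim' : Tendsto (fun s : ℝ => s⁻¹ * (Real.cos s - 1)) (nhdsWithin 0 (Ioi 0)) (nhds 0) := by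
  have h := (Real.hasDerivAt_cos 0)
  rw [hasDerivAt_iff_tendsto_slope] at h
  have h2 := h.mono_left (nhdsWithin_mono _ (fun x (hx : x ∈ Ioi 0) => ne_of_gt hx))
  rw [Real.sin_zero, neg_zero] at h2
  refine h2.congr (fun s => ?_)
  simp [slope_def_field, div_eq_inv_mul, Real.cos_zero]

end Aux

noncomputable section TorusExample

/-- Shorthand for vectors in `ℝ³`. -/
def v3 (a b c : ℝ) : EuclideanSpace ℝ (Fin 3) := WithLp.toLp 2 ![a, b, c]

def γ₁ (t : ℝ) : EuclideanSpace ℝ (Fin 3) := v3 0 (-Real.sin t) (Real.cos t - 1)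
def γ₂ (t : ℝ) : EuclideanSpace ℝ (Fin 3) := v3 0 (Real.cos t - 1) (-Real.sin t)
def γ₃ (t : ℝ) : EuclideanSpace ℝ (Fin 3) := v3 (-Real.sin t) (1 - Real.cos t) 0
def γ₄ (t : ℝ) : EuclideanSpace ℝ (Fin 3) := v3 (Real.cos t - 1) (Real.sin t) 0

/-- `C = conv{γ₁, γ₂, γ₃, γ₄}`, each curve taken over `t ∈ [0, π/4]`. -/
def Cset : Set (EuclideanSpace ℝ (Fin 3)) :=
  convexHull ℝ (γ₁ '' Icc 0 (Real.pi / 4) ∪ γ₂ '' Icc 0 (Real.pi / 4) ∪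
    γ₃ '' Icc 0 (Real.pi / 4) ∪ γ₄ '' Icc 0 (Real.pi / 4))

/-- `F = conv{γ₃, γ₄}`. -/
def Fface : Set (EuclideanSpace ℝ (Fin 3)) :=
  convexHull ℝ (γ₃ '' Icc 0 (Real.pi / 4) ∪ γ₄ '' Icc 0 (Real.pi / 4))


namespace TorusHelp

local notation "E3" => EuclideanSpace ℝ (Fin 3)

lemma pi4_pos : (0:ℝ) < Real.pi / 4 := by positivity

lemma cont3 : Continuous γ₃ := by
  unfold γ₃ v3
  apply (PiLp.continuous_toLp 2 _).comp
  apply continuous_pi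
  intro i
  fin_cases i <;> simp <;> fun_prop

lemma cont4 : Continuous γ₄ := by
  unfold γ₄ v3
  apply (PiLp.continuous_toLp 2 _).comp
  apply continuous_pi
  intro i
  fin_cases i <;> simp <;> fun_prop

lemma gamma30 : γ₃ 0 = 0 := by
  ext i; fin_cases i <;> simp [γ₃, v3]

def ℓz : E3 →ₗ[ℝ] ℝ := EuclideanSpace.projₗ 2

@[simp] lemma ℓz_apply (p : E3) : ℓz p = p 2 := rfl

lemma gen_z_nonpos : ∀ x ∈ (γ₁ '' Icc 0 (Real.pi / 4) ∪ γ₂ '' Icc 0 (Real.pi / 4) ∪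
    γ₃ '' Icc 0 (Real.pi / 4) ∪ γ₄ '' Icc 0 (Real.pi / 4)), ℓz x ≤ 0 := by
  rintro x (((⟨t, ht, rfl⟩ | ⟨t, ht, rfl⟩) | ⟨t, ht, rfl⟩) | ⟨t, ht, rfl⟩)
  · simp [γ₁, v3]; linarith [Real.cos_le_one t]
  · simp [γ₂, v3]
    exact Real.sin_nonneg_of_nonneg_of_le_pi ht.1 (by linarith [Real.pi_pos, ht.2])
  · simp [γ₃, v3]
  · simp [γ₄, v3]

lemma Cset_z_nonpos : ∀ p ∈ Cset, p 2 ≤ 0 := by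
  intro p hp
  have : Cset ⊆ {q : E3 | ℓz q ≤ 0} :=
    convexHull_min gen_z_nonpos (convex_halfSpace_le ℓz.isLinear 0)
  exact this hp

lemma Fface_sub : ∀ p ∈ Fface, p 2 = 0 ∧ 0 ≤ p 1 := by
  intro p hp
  have : Fface ⊆ {q : E3 | q 2 = 0 ∧ 0 ≤ q 1} := by
    apply convexHull_min
    · rintro x (⟨t, ht, rfl⟩ | ⟨t, ht, rfl⟩)
      · constructor
        · simp [γ₃, v3]
        · simp [γ₃, v3]; linarith [Real.cos_le_one t]
      · constructor
        · simp [γ₄, v3]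
        · simp [γ₄, v3]
          exact Real.sin_nonneg_of_nonneg_of_le_pi ht.1 (by linarith [Real.pi_pos, ht.2])
    · exact (convex_hyperplane ℓz.isLinear 0).inter
        (convex_halfSpace_ge (EuclideanSpace.projₗ (𝕜 := ℝ) (1 : Fin 3)).isLinear 0)
  exact this hp

lemma mem_F_of_z_eq_zero : ∀ y ∈ Cset, y 2 = 0 → y ∈ Fface := by
  intro y hy hy2
  have h1 : y ∈ convexHull ℝ {x ∈ (γ₁ '' Icc 0 (Real.pi / 4) ∪ γ₂ '' Icc 0 (Real.pi / 4) ∪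
      γ₃ '' Icc 0 (Real.pi / 4) ∪ γ₄ '' Icc 0 (Real.pi / 4)) | ℓz x = 0} :=
    mem_convexHull_of_eq_zero gen_z_nonpos hy hy2
  refine convexHull_mono ?_ h1
  rintro x ⟨(((⟨t, ht, rfl⟩ | ⟨t, ht, rfl⟩) | hx) | hx), hx0⟩
  · -- γ₁ t with cos t - 1 = 0 forces t = 0
    have h2 : Real.cos t = 1 := by
      simp [γ₁, v3] at hx0; linarith
    have ht0 : t = 0 := by
      have := (Real.cos_eq_one_iff_of_lt_of_lt
        (by nlinarith [Real.pi_pos, ht.1, ht.2]) (by nlinarith [Real.pi_pos, ht.2])).1 h2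
      exact this
    subst ht0
    refine Or.inl ⟨0, ⟨le_refl _, le_of_lt pi4_pos⟩, ?_⟩
    rw [gamma30]; ext i; fin_cases i <;> simp [γ₁, v3]
  · have h2 : Real.sin t = 0 := by
      simp [γ₂, v3] at hx0; linarith
    have ht0 : t = 0 := by
      rcases (Real.sin_eq_zero_iff_of_lt_of_lt
        (by nlinarith [Real.pi_pos, ht.1, ht.2]) (by nlinarith [Real.pi_pos, ht.2])).1 h2 with h
      exact h
    subst ht0
    refine Or.inl ⟨0, ⟨le_refl _, le_of_lt pi4_pos⟩, ?_⟩
    rw [gamma30]; ext i; fin_cases i <;> simp [γ₂, v3]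
  · exact Or.inl hx
  · exact Or.inr hx

lemma face_of : IsFaceOf Fface Cset := by
  have hmono : Fface ⊆ Cset := by
    apply convexHull_mono
    rintro x (h | h)
    · exact Or.inl (Or.inr h)
    · exact Or.inr h
  refine ⟨hmono, convex_convexHull ℝ _, ?_, ?_⟩
  · -- closed
    have hc : IsCompact (γ₃ '' Icc 0 (Real.pi / 4) ∪ γ₄ '' Icc 0 (Real.pi / 4)) :=
      ((isCompact_Icc.image cont3).union (isCompact_Icc.image cont4))
    exact (isCompact_convexHull_fd hc).isClosed
  · intro x hx y hy z hz hseg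
    obtain ⟨a, b, ha, hb, hab, hsum⟩ := hseg
    have hx2 : x 2 = 0 := (Fface_sub x hx).1
    have hy2 : y 2 ≤ 0 := Cset_z_nonpos y hy
    have hz2 : z 2 ≤ 0 := Cset_z_nonpos z hz
    have heq : a * y 2 + b * z 2 = 0 := by
      have := congrArg (fun p : EuclideanSpace ℝ (Fin 3) => p 2) hsum
      simpa [PiLp.add_apply, PiLp.smul_apply, hx2] using this
    have hy20 : y 2 = 0 := by nlinarith
    have hz20 : z 2 = 0 := by nlinarith
    exact ⟨mem_F_of_z_eq_zero y hy hy20, mem_F_of_z_eq_zero z hz hz20⟩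

end TorusHelp

/-- **Example.** The set `C` fails tangential exposure at `x = 0` for the face
`F = conv{γ₃, γ₄}`: `g = (0,−1,0)` lies in `T(x;C) ∩ span F` but not in `T(x;F)`;
moreover `⟨g, γ₃(t)⟩ ≤ 0` and `⟨g, γ₄(t)⟩ ≤ 0` on `[0, π/4]`, while
`g = lim_{s↓0} (0, −sin s, cos s − 1)/s`. -/
theorem torus_example_fails_tangential_exposure :
    IsFaceOf Fface Cset ∧ (0 : EuclideanSpace ℝ (Fin 3)) ∈ Fface ∧
    v3 0 (-1) 0 ∈ TangCone (0 : EuclideanSpace ℝ (Fin 3)) Cset ∩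
      (Submodule.span ℝ Fface : Set (EuclideanSpace ℝ (Fin 3))) ∧
    v3 0 (-1) 0 ∉ TangCone (0 : EuclideanSpace ℝ (Fin 3)) Fface ∧
    (∀ t ∈ Icc (0 : ℝ) (Real.pi / 4), ⟪v3 0 (-1) 0, γ₃ t⟫ ≤ 0 ∧ ⟪v3 0 (-1) 0, γ₄ t⟫ ≤ 0) ∧
    Tendsto (fun s : ℝ => s⁻¹ • γ₁ s) (nhdsWithin 0 (Ioi 0)) (nhds (v3 0 (-1) 0)) := by
  classical
  open TorusHelp in
  have h0F : (0 : EuclideanSpace ℝ (Fin 3)) ∈ Fface := by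
    rw [← gamma30]
    exact subset_convexHull ℝ _ (Or.inl ⟨0, ⟨le_refl _, le_of_lt pi4_pos⟩, rfl⟩)
  have hlim : Tendsto (fun s : ℝ => s⁻¹ • γ₁ s) (nhdsWithin 0 (Ioi 0)) (nhds (v3 0 (-1) 0)) := by
    set φ := PiLp.continuousLinearEquiv 2 ℝ (fun _ : Fin 3 => ℝ) with hφ
    have key : Tendsto (fun s : ℝ => φ (s⁻¹ • γ₁ s)) (nhdsWithin 0 (Ioi 0))
        (nhds (φ (v3 0 (-1) 0))) := by
      rw [tendsto_pi_nhds]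
      intro i
      fin_cases i
      · simpa [hφ, γ₁, v3] using (tendsto_const_nhds :
          Tendsto (fun _ : ℝ => (0:ℝ)) (nhdsWithin 0 (Ioi 0)) (nhds 0))
      · have h2 : Tendsto (fun s : ℝ => φ (s⁻¹ • γ₁ s) 1) (nhdsWithin 0 (Ioi 0)) (nhds (-1)) := by
          refine sin_lim'.neg.congr (fun s => ?_)
          simp [hφ, γ₁, v3]
        simpa [hφ, v3] using h2
      · have h2 : Tendsto (fun s : ℝ => φ (s⁻¹ • γ₁ s) 2) (nhdsWithin 0 (Ioi 0)) (nhds 0) := by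
          refine cos_lim'.congr (fun s => ?_)
          simp [hφ, γ₁, v3]
        simpa [hφ, v3] using h2
    have := (φ.symm.continuous.tendsto _).comp key
    simpa [hφ, Function.comp_def] using this
  refine ⟨face_of, h0F, ⟨?_, ?_⟩, ?_, ?_, hlim⟩
  · -- g ∈ TangCone 0 Cset
    refine mem_closure_of_tendsto hlim ?_
    filter_upwards [Ioo_mem_nhdsGT_of_mem (⟨le_refl _, pi4_pos⟩ : (0:ℝ) ∈ Ico 0 (Real.pi/4))]
      with s hs
    refine ⟨s, hs.1, ?_⟩
    have hss : s • s⁻¹ • γ₁ s = γ₁ s := by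
      rw [smul_smul, mul_inv_cancel₀ (ne_of_gt hs.1), one_smul]
    rw [zero_add, hss]
    exact subset_convexHull ℝ _ (Or.inl (Or.inl (Or.inl ⟨s, ⟨le_of_lt hs.1, le_of_lt hs.2⟩, rfl⟩)))
  · -- g ∈ span F
    have hp : γ₃ (Real.pi/4) ∈ Fface :=
      subset_convexHull ℝ _ (Or.inl ⟨_, ⟨le_of_lt pi4_pos, le_refl _⟩, rfl⟩)
    have hq : γ₄ (Real.pi/4) ∈ Fface :=
      subset_convexHull ℝ _ (Or.inr ⟨_, ⟨le_of_lt pi4_pos, le_refl _⟩, rfl⟩)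
    have hcomb : v3 0 (-1) 0 = (Real.sqrt 2 / 2) • γ₃ (Real.pi/4) +
        (-(1 + Real.sqrt 2 / 2)) • γ₄ (Real.pi/4) := by
      have hs2 : Real.sqrt 2 ^ 2 = 2 := Real.sq_sqrt (by norm_num)
      ext i
      fin_cases i <;>
        simp [v3, γ₃, γ₄, Real.cos_pi_div_four, Real.sin_pi_div_four,
          PiLp.add_apply, PiLp.smul_apply] <;> nlinarith [Real.sqrt_nonneg 2]
    rw [hcomb]
    exact Submodule.add_mem _
      (Submodule.smul_mem _ _ (Submodule.subset_span hp))
      (Submodule.smul_mem _ _ (Submodule.subset_span hq))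
  · -- g ∉ TangCone 0 Fface
    intro hg
    have hclosed : IsClosed {d : EuclideanSpace ℝ (Fin 3) | 0 ≤ d 1} :=
      isClosed_le continuous_const ((EuclideanSpace.proj (1 : Fin 3)).continuous)
    have hsub : TangCone 0 Fface ⊆ {d : EuclideanSpace ℝ (Fin 3) | 0 ≤ d 1} := by
      apply closure_minimal _ hclosed
      rintro d ⟨ε, hε, hmem⟩
      rw [zero_add] at hmem
      have h1 : 0 ≤ (ε • d) 1 := (Fface_sub _ hmem).2
      rw [PiLp.smul_apply, smul_eq_mul] at h1
      exact (mul_nonneg_iff_of_pos_left hε).1 h1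
    have := hsub hg
    simp [v3] at this
    linarith
  · -- inner products
    intro t ht
    constructor
    · simp [v3, γ₃, PiLp.inner_apply, Fin.sum_univ_three]
      linarith [Real.cos_le_one t]
    · simp [v3, γ₄, PiLp.inner_apply, Fin.sum_univ_three]
      exact Real.sin_nonneg_of_nonneg_of_le_pi ht.1 (by linarith [Real.pi_pos, ht.2])


end TorusExample
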